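/- Let β, J > 0 and define Θ : (−1,1) → ℝ by Θ(s) = (1/J)(−s + ((1+J)/β)·log((1+s)/(1−s))). If −1 < Θ'(0) < 1, where Θ'(0) = (1/J)(2(1+J)/β − 1), then the set {(s,t) ∈ (−1,1) × (−1,1) : Θ(s) = t and Θ(t) = s} has exactly three elements. -/

import Mathlib

open Real Set Filter Topology

noncomputable def thmap (β J s : ℝ) : ℝ :=
  (1 / J) * (-s + ((1 + J) / β) * Real.log ((1 + s) / (1 - s)))

lemma thmap_odd (β J s : ℝ) : thmap β J (-s) = - thmap β J s := by
  unfold thmap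
  rw [show (1 + -s) / (1 - -s) = ((1 + s) / (1 - s))⁻¹ by rw [inv_div]; ring_nf,
    Real.log_inv]
  ring

lemma thmap_hasDerivAt (β J : ℝ) {s : ℝ} (hs : s ∈ Ioo (-1:ℝ) 1) :
    HasDerivAt (thmap β J) ((1 / J) * (-1 + ((1 + J) / β) * (2 / (1 - s ^ 2)))) s := by
  have h1 : 0 < 1 + s := by linarith [hs.1]
  have h2 : 0 < 1 - s := by linarith [hs.2]
  have hd1 : HasDerivAt (fun x : ℝ => Real.log (1 + x)) (1 / (1 + s)) s := by
    simpa using ((hasDerivAt_id s).const_add 1).log h1.ne'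
  have hd2 : HasDerivAt (fun x : ℝ => Real.log (1 - x)) (-1 / (1 - s)) s := by
    simpa using ((hasDerivAt_id s).const_sub 1).log h2.ne'
  have hd : HasDerivAt
      (fun x : ℝ => (1 / J) * (-x + ((1 + J) / β) * (Real.log (1 + x) - Real.log (1 - x))))
      ((1 / J) * (-1 + ((1 + J) / β) * (1 / (1 + s) - -1 / (1 - s)))) s := by
    exact (((hasDerivAt_id s).neg.add ((hd1.sub hd2).const_mul ((1 + J) / β))).const_mul
      (1 / J))
  have heq : (1 / (1 + s) - -1 / (1 - s)) = 2 / (1 - s ^ 2) := by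
    have hss : (1:ℝ) - s ^ 2 = (1 + s) * (1 - s) := by ring
    rw [hss]
    field_simp
    ring
  rw [heq] at hd
  apply hd.congr_of_eventuallyEq
  filter_upwards [Ioo_mem_nhds hs.1 hs.2] with x hx
  have hx1 : 0 < 1 + x := by linarith [hx.1]
  have hx2 : 0 < 1 - x := by linarith [hx.2]
  unfold thmap
  rw [Real.log_div hx1.ne' hx2.ne']

lemma thmap_deriv_gt (β J : ℝ) (hβ : 0 < β) (hJ : 0 < J)
    (h₁ : -1 < (1 / J) * (2 * (1 + J) / β - 1)) {s : ℝ} (hs : s ∈ Ioo (-1:ℝ) 1) :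
    -1 < (1 / J) * (-1 + ((1 + J) / β) * (2 / (1 - s ^ 2))) := by
  have hs2 : 0 < 1 - s ^ 2 := by nlinarith [hs.1, hs.2]
  have hc : 0 < (1 + J) / β := by positivity
  have hJ' : 0 < 1 / J := by positivity
  have h2 : 2 ≤ 2 / (1 - s ^ 2) := by
    rw [le_div_iff₀ hs2]; nlinarith [sq_nonneg s]
  have key : (1 / J) * (2 * (1 + J) / β - 1) ≤
      (1 / J) * (-1 + ((1 + J) / β) * (2 / (1 - s ^ 2))) := by
    have h3 : 2 * (1 + J) / β - 1 ≤ -1 + ((1 + J) / β) * (2 / (1 - s ^ 2)) := by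
      have : ((1 + J) / β) * 2 ≤ ((1 + J) / β) * (2 / (1 - s ^ 2)) :=
        mul_le_mul_of_nonneg_left h2 hc.le
      have h4 : 2 * (1 + J) / β = ((1 + J) / β) * 2 := by ring
      linarith [h4 ▸ this]
    exact mul_le_mul_of_nonneg_left h3 hJ'.le
  linarith

lemma two_cycle_aux (β J : ℝ) (hβ : 0 < β) (hJ : 0 < J)
    (h₁ : -1 < (1 / J) * (2 * (1 + J) / β - 1)) {s t : ℝ}
    (hs : s ∈ Ioo (-1:ℝ) 1) (ht : t ∈ Ioo (-1:ℝ) 1) (hlt : s < t)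
    (e1 : thmap β J s = t) (e2 : thmap β J t = s) : False := by
  obtain ⟨ξ, hξ, hξ'⟩ := exists_hasDerivAt_eq_slope (thmap β J)
    (fun x => (1 / J) * (-1 + ((1 + J) / β) * (2 / (1 - x ^ 2)))) hlt
    (fun x hx => (thmap_hasDerivAt β J
      ⟨lt_of_lt_of_le hs.1 hx.1, lt_of_le_of_lt hx.2 ht.2⟩).continuousAt.continuousWithinAt)
    (fun x hx => thmap_hasDerivAt β J ⟨lt_trans hs.1 hx.1, lt_trans hx.2 ht.2⟩)
  have hξm : ξ ∈ Ioo (-1:ℝ) 1 := ⟨lt_trans hs.1 hξ.1, lt_trans hξ.2 ht.2⟩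
  have hne : t - s ≠ 0 := sub_ne_zero_of_ne (ne_of_gt hlt)
  have : (thmap β J t - thmap β J s) / (t - s) = -1 := by
    rw [e1, e2, div_eq_iff hne]
    ring
  rw [this] at hξ'
  have := thmap_deriv_gt β J hβ hJ h₁ hξm
  linarith [hξ' ▸ this]

theorem stmt_0 (β J : ℝ) (hβ : 0 < β) (hJ : 0 < J)
    (h₁ : -1 < (1 / J) * (2 * (1 + J) / β - 1))
    (h₂ : (1 / J) * (2 * (1 + J) / β - 1) < 1) :
    {p : ℝ × ℝ | p.1 ∈ Ioo (-1 : ℝ) 1 ∧ p.2 ∈ Ioo (-1 : ℝ) 1 ∧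
      (1 / J) * (-p.1 + ((1 + J) / β) * Real.log ((1 + p.1) / (1 - p.1))) = p.2 ∧
      (1 / J) * (-p.2 + ((1 + J) / β) * Real.log ((1 + p.2) / (1 - p.2))) = p.1}.ncard
      = 3 := by
  set g : ℝ → ℝ := fun s => thmap β J s - s with hg
  have hg0 : g 0 = 0 := by simp [hg, thmap]
  have hgderiv : ∀ {s : ℝ}, s ∈ Ioo (-1:ℝ) 1 →
      HasDerivAt g ((1 / J) * (-1 + ((1 + J) / β) * (2 / (1 - s ^ 2))) - 1) s := by
    intro s hs
    exact (thmap_hasDerivAt β J hs).sub (hasDerivAt_id s)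
  -- derivative of g at 0 is negative
  have hd0 : HasDerivAt g ((1 / J) * (2 * (1 + J) / β - 1) - 1) 0 := by
    have h := hgderiv (show (0:ℝ) ∈ Ioo (-1:ℝ) 1 by norm_num)
    have heq0 : (1 / J) * (-1 + ((1 + J) / β) * (2 / (1 - (0:ℝ) ^ 2))) - 1
        = (1 / J) * (2 * (1 + J) / β - 1) - 1 := by
      norm_num
      left
      ring
    rwa [heq0] at h
  have hd0neg : (1 / J) * (2 * (1 + J) / β - 1) - 1 < 0 := by linarith
  -- positive point: s₁
  set A : ℝ := Real.exp (β + 1) with hA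
  have hA1 : 1 < A := by
    rw [hA]; have : (0:ℝ) < β + 1 := by linarith
    calc (1:ℝ) = Real.exp 0 := by simp
    _ < Real.exp (β + 1) := Real.exp_lt_exp.mpr this
  set s₁ : ℝ := (A - 1) / (A + 1) with hs₁def
  have hApos : 0 < A + 1 := by linarith
  have hs₁pos : 0 < s₁ := by
    rw [hs₁def]; exact div_pos (by linarith) hApos
  have hs₁lt : s₁ < 1 := by
    rw [hs₁def, div_lt_one hApos]; linarith
  have hs₁mem : s₁ ∈ Ioo (-1:ℝ) 1 := ⟨by linarith, hs₁lt⟩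
  have hlog₁ : Real.log ((1 + s₁) / (1 - s₁)) = β + 1 := by
    have h1 : 1 + s₁ = 2 * A / (A + 1) := by rw [hs₁def]; field_simp; ring
    have h2 : 1 - s₁ = 2 / (A + 1) := by rw [hs₁def]; field_simp; ring
    have h3 : (1 + s₁) / (1 - s₁) = A := by
      rw [h1, h2]; field_simp
    rw [h3, hA, Real.log_exp]
  have hgs₁pos : 0 < g s₁ := by
    have : g s₁ = (1 / J) * (-s₁ + ((1 + J) / β) * (β + 1)) - s₁ := by
      rw [hg]; simp only [thmap, hlog₁]
    rw [this]
    rw [sub_pos]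
    have key : s₁ * J < -s₁ + ((1 + J) / β) * (β + 1) := by
      have : ((1 + J) / β) * (β + 1) = (1 + J) * ((β + 1) / β) := by ring
      rw [this]
      have hb : 1 < (β + 1) / β := by
        rw [lt_div_iff₀ hβ]; linarith
      nlinarith [hs₁pos, hs₁lt, hJ]
    calc s₁ = (1 / J) * (s₁ * J) := by field_simp
    _ < (1 / J) * (-s₁ + ((1 + J) / β) * (β + 1)) := by
        apply mul_lt_mul_of_pos_left key (by positivity)
  -- negative point δ
  have hslope : Tendsto (slope g 0) (𝓝[>] 0) (𝓝 ((1 / J) * (2 * (1 + J) / β - 1) - 1)) :=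
    (hasDerivAt_iff_tendsto_slope.mp hd0).mono_left
      (nhdsWithin_mono 0 (fun x hx => ne_of_gt hx))
  have hev : ∀ᶠ x in 𝓝[>] (0:ℝ), slope g 0 x < 0 :=
    hslope.eventually (eventually_lt_nhds hd0neg)
  have hev2 : ∀ᶠ x in 𝓝[>] (0:ℝ), x ∈ Ioo (0:ℝ) s₁ :=
    Ioo_mem_nhdsGT_of_mem ⟨le_refl _, hs₁pos⟩
  obtain ⟨δ, hδs, hδmem⟩ := (hev.and hev2).exists
  have hδpos : 0 < δ := hδmem.1
  have hgδneg : g δ < 0 := by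
    have hsl : slope g 0 δ = g δ / δ := by
      simp [slope, hg0, div_eq_inv_mul]
    rw [hsl] at hδs
    by_contra hge
    push_neg at hge
    have : 0 ≤ g δ / δ := div_nonneg hge hδpos.le
    linarith
  -- IVT: root a ∈ (δ, s₁)
  have hcontg : ContinuousOn g (Icc δ s₁) := by
    intro x hx
    have hxm : x ∈ Ioo (-1:ℝ) 1 := ⟨by linarith [hx.1], lt_of_le_of_lt hx.2 hs₁lt⟩
    exact (hgderiv hxm).continuousAt.continuousWithinAt
  obtain ⟨a, haIoo, hga⟩ := intermediate_value_Ioo hδmem.2.le hcontg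
    (show (0:ℝ) ∈ Ioo (g δ) (g s₁) from ⟨hgδneg, hgs₁pos⟩)
  have hapos : 0 < a := lt_trans hδpos haIoo.1
  have halt1 : a < 1 := lt_trans haIoo.2 hs₁lt
  have tha : thmap β J a = a := by
    have : thmap β J a - a = 0 := hga
    linarith
  -- strict convexity of g on [0,1)
  have hconv : StrictConvexOn ℝ (Ico (0:ℝ) 1) g := by
    apply StrictMonoOn.strictConvexOn_of_deriv (convex_Ico 0 1)
    · intro x hx
      have hxm : x ∈ Ioo (-1:ℝ) 1 := ⟨by linarith [hx.1], hx.2⟩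
      exact (hgderiv hxm).continuousAt.continuousWithinAt
    · rw [interior_Ico]
      intro x hx y hy hxy
      have hxm : x ∈ Ioo (-1:ℝ) 1 := ⟨by linarith [hx.1], hx.2⟩
      have hym : y ∈ Ioo (-1:ℝ) 1 := ⟨by linarith [hy.1], hy.2⟩
      rw [(hgderiv hxm).deriv, (hgderiv hym).deriv]
      have hx2 : 0 < 1 - x ^ 2 := by nlinarith [hx.1, hx.2]
      have hy2 : 0 < 1 - y ^ 2 := by nlinarith [hy.1, hy.2]
      have hlt2 : 1 - y ^ 2 < 1 - x ^ 2 := by nlinarith [hx.1]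
      have h5 : 2 / (1 - x ^ 2) < 2 / (1 - y ^ 2) :=
        div_lt_div_of_pos_left two_pos hy2 hlt2
      have hc : 0 < (1 + J) / β := by positivity
      have hJ' : 0 < 1 / J := by positivity
      have h6 := mul_lt_mul_of_pos_left h5 hc
      have h7 := mul_lt_mul_of_pos_left
        (show -1 + (1 + J) / β * (2 / (1 - x ^ 2)) < -1 + (1 + J) / β * (2 / (1 - y ^ 2)) by
          linarith) hJ'
      linarith
  -- a strictly convex function vanishing at 0 and q is negative in between
  have hneg : ∀ p q : ℝ, 0 < p → p < q → q < 1 → g q = 0 → g p < 0 := by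
    intro p q hp hpq hq1 hgq
    have h0m : (0:ℝ) ∈ Ico (0:ℝ) 1 := ⟨le_refl _, one_pos⟩
    have hqm : q ∈ Ico (0:ℝ) 1 := ⟨by linarith, hq1⟩
    have hq0 : (0:ℝ) ≠ q := by intro h; rw [← h] at hpq; linarith
    have hqpos : 0 < q := by linarith
    have hcoef : (q - p) / q + p / q = 1 := by field_simp; ring
    have hca : 0 < (q - p) / q := div_pos (by linarith) hqpos
    have hcb : 0 < p / q := by positivity
    have h2 := hconv.2 h0m hqm hq0 hca hcb hcoef
    have harg : (q - p) / q * (0:ℝ) + p / q * q = p := by field_simp; ring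
    rw [smul_eq_mul, smul_eq_mul, smul_eq_mul, smul_eq_mul, harg, hg0, hgq] at h2
    simp only [mul_zero, add_zero] at h2
    linarith
  have huniq : ∀ b : ℝ, 0 < b → b < 1 → g b = 0 → b = a := by
    intro b hb hb1 hgb
    rcases lt_trichotomy b a with h | h | h
    · exact absurd hgb (ne_of_lt (hneg b a hb h halt1 hga))
    · exact h
    · exact absurd hga (ne_of_lt (hneg a b hapos h hb1 hgb))
  have hgodd : ∀ s : ℝ, g (-s) = - g s := by
    intro s
    simp only [hg]
    rw [thmap_odd]
    ring
  have hzero : ∀ s : ℝ, s ∈ Ioo (-1:ℝ) 1 → g s = 0 → s = -a ∨ s = 0 ∨ s = a := by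
    intro s hs hgs
    rcases lt_trichotomy s 0 with h | h | h
    · left
      have h1 : g (-s) = 0 := by rw [hgodd, hgs]; ring
      have := huniq (-s) (by linarith) (by linarith [hs.1]) h1
      linarith
    · right; left; exact h
    · right; right; exact huniq s h hs.2 hgs
  have hSeq : {p : ℝ × ℝ | p.1 ∈ Ioo (-1 : ℝ) 1 ∧ p.2 ∈ Ioo (-1 : ℝ) 1 ∧
      (1 / J) * (-p.1 + ((1 + J) / β) * Real.log ((1 + p.1) / (1 - p.1))) = p.2 ∧
      (1 / J) * (-p.2 + ((1 + J) / β) * Real.log ((1 + p.2) / (1 - p.2))) = p.1} =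
      {((-a : ℝ), (-a : ℝ)), ((0:ℝ), (0:ℝ)), ((a : ℝ), (a : ℝ))} := by
    ext ⟨x, y⟩
    simp only [mem_setOf_eq, mem_insert_iff, mem_singleton_iff, Prod.mk.injEq]
    constructor
    · rintro ⟨hx, hy, e1, e2⟩
      have e1' : thmap β J x = y := e1
      have e2' : thmap β J y = x := e2
      have hxy : x = y := by
        by_contra hne
        rcases Ne.lt_or_gt hne with hlt | hlt
        · exact two_cycle_aux β J hβ hJ h₁ hx hy hlt e1' e2'
        · exact two_cycle_aux β J hβ hJ h₁ hy hx hlt e2' e1'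
      have hgz : g x = 0 := by
        show thmap β J x - x = 0
        rw [e1', ← hxy]
        ring
      rcases hzero x hx hgz with h | h | h
      · exact Or.inl ⟨h, by rw [← hxy]; exact h⟩
      · exact Or.inr (Or.inl ⟨h, by rw [← hxy]; exact h⟩)
      · exact Or.inr (Or.inr ⟨h, by rw [← hxy]; exact h⟩)
    · rintro (⟨h1, h2⟩ | ⟨h1, h2⟩ | ⟨h1, h2⟩) <;> subst h1 <;> subst h2
      · refine ⟨⟨by linarith, by linarith⟩, ⟨by linarith, by linarith⟩, ?_, ?_⟩ <;>
        · show thmap β J (-a) = -a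
          rw [thmap_odd, tha]
      · refine ⟨⟨by norm_num, by norm_num⟩, ⟨by norm_num, by norm_num⟩, ?_, ?_⟩ <;>
        · show thmap β J 0 = 0
          simp [thmap]
      · exact ⟨⟨by linarith, halt1⟩, ⟨by linarith, halt1⟩, tha, tha⟩
  rw [hSeq]
  rw [Set.ncard_eq_three]
  refine ⟨((-a : ℝ), (-a : ℝ)), ((0:ℝ), (0:ℝ)), ((a : ℝ), (a : ℝ)), ?_, ?_, ?_, rfl⟩
  · simp only [ne_eq, Prod.mk.injEq, not_and]
    intro h; linarith
  · simp only [ne_eq, Prod.mk.injEq, not_and]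
    intro h; linarith
  · simp only [ne_eq, Prod.mk.injEq, not_and]
    intro h; linarith
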